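/- Let n, j be integers with 1 ≤ j ≤ n. For every real number x (equivalently, as an identity of polynomials with integer coefficients), Σ_{m=j}^{n} C(n,m) x^m (1-x)^{n-m} = Σ_{a=0}^{n-j} (-1)^a C(n, j+a) C(a+j-1, j-1) x^{a+j}. -/

import Mathlib

open Finset

private lemma one_sub_pow_expand (x : ℝ) (N : ℕ) :
    (1 - x) ^ N = ∑ a ∈ range (N + 1), (-1 : ℝ) ^ a * (N.choose a : ℝ) * x ^ a := by
  have h : (1 - x) ^ N = ((-x) + 1) ^ N := by ring_nf
  rw [h, add_pow]
  refine Finset.sum_congr rfl fun a _ => ?_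
  rw [neg_pow]
  ring

private lemma key_nat (n i a k : ℕ) (h : i + 1 + (k + 1) = n) (ha : a ≤ k) :
    n.choose (i + 1) * (k + 1).choose (a + 1)
      = n.choose (i + a + 2) * ((a + i + 1).choose (i + 1) + (a + i + 1).choose i) := by
  have h1 : i + 1 + (a + 1) ≤ n := by omega
  have h2 : i + 1 ≤ i + 1 + (a + 1) := by omega
  have hm := Nat.choose_mul (n := n) h2
  rw [Nat.add_sub_cancel_left, show n - (i + 1) = k + 1 from by omega] at hm
  rw [← hm, show i + 1 + (a + 1) = (a + i + 1) + 1 from by ring, Nat.choose_succ_succ,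
    show a + i + 1 + 1 = i + a + 2 from by omega, Nat.add_comm ((a + i + 1).choose i)]

private lemma aux_unrel (n : ℕ) (x : ℝ) :
    ∀ k i, i + 1 + k = n →
    ∑ m ∈ Finset.Icc (i + 1) n, (n.choose m : ℝ) * x ^ m * (1 - x) ^ (n - m) =
      ∑ a ∈ Finset.range (k + 1),
        (-1 : ℝ) ^ a * (n.choose (i + 1 + a) : ℝ) * ((a + i).choose i : ℝ) * x ^ (a + (i + 1)) := by
  intro k
  induction k with
  | zero =>
    intro i hi
    subst hi
    simp
  | succ k IH =>
    intro i hi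
    have hIH := IH (i + 1) (by omega)
    have hle : i + 1 ≤ n := by omega
    rw [Finset.Icc_eq_cons_Ioc hle, Finset.sum_cons, ← Finset.Icc_add_one_left_eq_Ioc, hIH]
    have hnm : n - (i + 1) = k + 1 := by omega
    rw [hnm, one_sub_pow_expand, Finset.mul_sum]
    have hL : ∀ a, (n.choose (i+1) : ℝ) * x ^ (i+1) * ((-1:ℝ)^a * ((k+1).choose a : ℝ) * x ^ a)
        = (n.choose (i+1) : ℝ) * ((-1:ℝ)^a * ((k+1).choose a : ℝ)) * x ^ (a + (i+1)) := by
      intro a; rw [pow_add]; ring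
    simp_rw [hL]
    rw [Finset.sum_range_succ' (fun a => (n.choose (i+1) : ℝ) * ((-1:ℝ)^a * ((k+1).choose a : ℝ)) * x ^ (a + (i+1))),
        Finset.sum_range_succ' (fun a => (-1 : ℝ) ^ a * (n.choose (i + 1 + a) : ℝ) * ((a + i).choose i : ℝ) * x ^ (a + (i + 1)))]
    rw [add_right_comm, ← Finset.sum_add_distrib]
    congr 1
    · refine Finset.sum_congr rfl fun a ha => ?_
      have ha' : a ≤ k := Nat.lt_succ_iff.mp (Finset.mem_range.mp ha)
      have hk := key_nat n i a k hi ha'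
      have hkr : (n.choose (i + 1) : ℝ) * ((k + 1).choose (a + 1) : ℝ)
          = (n.choose (i + a + 2) : ℝ) * (((a + i + 1).choose (i + 1) : ℝ) + ((a + i + 1).choose i : ℝ)) := by
        exact_mod_cast congrArg (Nat.cast (R := ℝ)) hk
      rw [show a + (i + 1 + 1) = a + 1 + (i + 1) from by ring,
          show i + 1 + 1 + a = i + a + 2 from by ring,
          show i + 1 + (a + 1) = i + a + 2 from by ring,
          show a + (i + 1) = a + i + 1 from by ring,
          show a + 1 + i = a + i + 1 from by ring,
          pow_succ (-1 : ℝ) a]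
      linear_combination (-(1 : ℝ) * (-1 : ℝ) ^ a * x ^ (a + 1 + (i + 1))) * hkr
    · simp

/-- For `1 ≤ j ≤ n` and every real `x`, the unreliability of the i.i.d.
`j`-out-of-`n`:F system equals the alternating Betti-number formula:
`Σ_{m=j}^{n} C(n,m) x^m (1-x)^{n-m} = Σ_{a=0}^{n-j} (-1)^a C(n,j+a) C(a+j-1,j-1) x^{a+j}`. -/
theorem unreliability_eq_betti_formula (n j : ℕ) (hj : 1 ≤ j) (hjn : j ≤ n) (x : ℝ) :
    ∑ m ∈ Finset.Icc j n, (n.choose m : ℝ) * x ^ m * (1 - x) ^ (n - m) =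
      ∑ a ∈ Finset.range (n - j + 1),
        (-1 : ℝ) ^ a * (n.choose (j + a) : ℝ) * ((a + j - 1).choose (j - 1) : ℝ) *
          x ^ (a + j) := by
  obtain ⟨i, rfl⟩ : ∃ i, j = i + 1 := ⟨j - 1, by omega⟩
  rw [aux_unrel n x (n - (i + 1)) i (by omega)]
  refine Finset.sum_congr rfl fun a _ => ?_
  rw [show a + (i + 1) - 1 = a + i from by omega, show i + 1 - 1 = i from by omega]
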